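/- arXiv:0903.1361 — 2 statements merged into one kernel-verified Lean document; each statement's English description precedes it below -/
import Mathlib

section
/- For n₁, n₂ ∈ ℕ and p₁, p₂ ∈ [0,1], the binomial distributions b_{n₁,p₁} and b_{n₂,p₂} have a half-monotone likelihood ratio: assuming w.l.o.g. n₁ ≤ n₂ and p₁,p₂ ∈ (0,1), the ratio ℓ(k) = b_{n₁,p₁}({k})/b_{n₂,p₂}({k}) for k = 0,...,n₁ is first monotone increasing and then monotone decreasing (i.e., unimodal). -/
/-- The binomial weight `b_{n,p}({k}) = C(n,k) p^k (1-p)^(n-k)`. -/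
noncomputable def binomPMF (n : ℕ) (p : ℝ) (k : ℕ) : ℝ :=
  (n.choose k : ℝ) * p ^ k * (1 - p) ^ (n - k)

lemma binomPMF_pos {n k : ℕ} {p : ℝ} (hk : k ≤ n) (hp : p ∈ Set.Ioo (0:ℝ) 1) :
    0 < binomPMF n p k := by
  unfold binomPMF
  have h1 : (0:ℝ) < n.choose k := by
    exact_mod_cast Nat.choose_pos hk
  have h2 : (0:ℝ) < p ^ k := pow_pos hp.1 k
  have h3 : (0:ℝ) < (1 - p) ^ (n - k) := pow_pos (by linarith [hp.2]) _
  positivity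

lemma binomPMF_step {n k : ℕ} {p : ℝ} (hk : k < n) :
    (k + 1 : ℝ) * (1 - p) * binomPMF n p (k + 1)
      = ((n - k : ℕ) : ℝ) * p * binomPMF n p k := by
  unfold binomPMF
  have h1 : n - k = (n - (k + 1)) + 1 := by omega
  have h2 : (n.choose (k+1) : ℝ) * ((k:ℝ) + 1)
      = (n.choose k : ℝ) * ((n - k : ℕ) : ℝ) := by
    exact_mod_cast congrArg (Nat.cast : ℕ → ℝ) (Nat.choose_succ_right_eq n k)
  have h3 : (1 - p) ^ (n - k) = (1 - p) ^ (n - (k + 1)) * (1 - p) := by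
    rw [← pow_succ, show n - (k + 1) + 1 = n - k from by omega]
  rw [h3, pow_succ]
  linear_combination (p ^ k * p * (1 - p) ^ (n - (k + 1)) * (1 - p)) * h2

lemma monotoneOn_of_step (f : ℕ → ℝ) (m : ℕ) (h : ∀ k < m, f k ≤ f (k + 1)) :
    MonotoneOn f (Set.Icc 0 m) := by
  have key : ∀ b ≤ m, ∀ a ≤ b, f a ≤ f b := by
    intro b
    induction b with
    | zero => intro _ a ha; interval_cases a; exact le_rfl
    | succ b ih =>
      intro hb a ha
      rcases Nat.eq_or_lt_of_le ha with rfl | hlt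
      · exact le_rfl
      · exact le_trans (ih (by omega) a (by omega)) (h b (by omega))
  intro a ha b hb hab
  exact key b hb.2 a hab

lemma antitoneOn_of_step (f : ℕ → ℝ) (k₀ m : ℕ)
    (h : ∀ k, k₀ ≤ k → k < m → f (k + 1) ≤ f k) :
    AntitoneOn f (Set.Icc k₀ m) := by
  have key : ∀ b ≤ m, ∀ a, k₀ ≤ a → a ≤ b → f b ≤ f a := by
    intro b
    induction b with
    | zero => intro _ a _ ha; interval_cases a; exact le_rfl
    | succ b ih =>
      intro hb a ha hab
      rcases Nat.eq_or_lt_of_le hab with rfl | hlt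
      · exact le_rfl
      · exact le_trans (h b (by omega) (by omega)) (ih (by omega) a ha (by omega))
  intro a ha b hb hab
  exact key b hb.2 a ha.1 hab

/-- Binomial distributions have a half-monotone (unimodal) likelihood ratio. -/
theorem binomial_half_monotone_likelihood_ratio (n₁ n₂ : ℕ) (p₁ p₂ : ℝ)
    (hn : n₁ ≤ n₂) (h₁ : p₁ ∈ Set.Ioo (0:ℝ) 1) (h₂ : p₂ ∈ Set.Ioo (0:ℝ) 1) :
    ∃ k₀ ≤ n₁,
      MonotoneOn (fun k : ℕ => binomPMF n₁ p₁ k / binomPMF n₂ p₂ k) (Set.Icc 0 k₀) ∧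
      AntitoneOn (fun k : ℕ => binomPMF n₁ p₁ k / binomPMF n₂ p₂ k) (Set.Icc k₀ n₁) := by
  set ℓ : ℕ → ℝ := fun k => binomPMF n₁ p₁ k / binomPMF n₂ p₂ k with hℓ
  have hp₁ := h₁.1; have hp₁' : (0:ℝ) < 1 - p₁ := by linarith [h₁.2]
  have hp₂ := h₂.1; have hp₂' : (0:ℝ) < 1 - p₂ := by linarith [h₂.2]
  set c : ℝ := (p₁ * (1 - p₂)) / ((1 - p₁) * p₂) with hc
  have hcpos : 0 < c := by positivity
  set r : ℕ → ℝ := fun k => ((n₁ - k : ℕ) : ℝ) / ((n₂ - k : ℕ) : ℝ) * c with hr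
  have hℓpos : ∀ k ≤ n₁, 0 < ℓ k := by
    intro k hk
    exact div_pos (binomPMF_pos hk h₁) (binomPMF_pos (le_trans hk hn) h₂)
  -- step identity: ℓ (k+1) = ℓ k * r k for k < n₁
  have hstep : ∀ k < n₁, ℓ (k + 1) = ℓ k * r k := by
    intro k hk
    have hk₂ : k < n₂ := lt_of_lt_of_le hk hn
    have e₁ := binomPMF_step (p := p₁) hk
    have e₂ := binomPMF_step (p := p₂) hk₂
    have hA := binomPMF_pos (n := n₁) (k := k) (p := p₁) hk.le h₁
    have hB := binomPMF_pos (n := n₂) (k := k) (p := p₂) hk₂.le h₂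
    have hA' := binomPMF_pos (n := n₁) (k := k+1) (p := p₁) hk h₁
    have hB' := binomPMF_pos (n := n₂) (k := k+1) (p := p₂) hk₂ h₂
    have hd₂ : (0:ℝ) < ((n₂ - k : ℕ) : ℝ) := by
      have : 0 < n₂ - k := by omega
      exact_mod_cast this
    have hk1 : ((k:ℝ) + 1) ≠ 0 := by positivity
    simp only [hℓ, hr, hc]
    field_simp
    apply mul_left_cancel₀ hk1
    linear_combination (binomPMF n₂ p₂ k * ((n₂ - k : ℕ) : ℝ) * p₂) * e₁
      - (binomPMF n₁ p₁ k * ((n₁ - k : ℕ) : ℝ) * p₁) * e₂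
  -- r is antitone below n₁
  have hrant : ∀ j m, j ≤ m → m < n₁ → r m ≤ r j := by
    intro j m hjm hm
    have hd₁ : (0:ℝ) < ((n₂ - m : ℕ) : ℝ) := by
      have : 0 < n₂ - m := by omega
      exact_mod_cast this
    have hd₂ : (0:ℝ) < ((n₂ - j : ℕ) : ℝ) := by
      have : 0 < n₂ - j := by omega
      exact_mod_cast this
    have key : ((n₁ - m : ℕ) : ℝ) / ((n₂ - m : ℕ) : ℝ)
        ≤ ((n₁ - j : ℕ) : ℝ) / ((n₂ - j : ℕ) : ℝ) := by
      rw [div_le_div_iff₀ hd₁ hd₂]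
      have hnat : (n₁ - m) * (n₂ - j) ≤ (n₁ - j) * (n₂ - m) := by
        have h2 : n₁ - j = (n₁ - m) + (m - j) := by omega
        have h3 : n₂ - j = (n₂ - m) + (m - j) := by omega
        have h4 : n₁ - m ≤ n₂ - m := by omega
        calc (n₁ - m) * (n₂ - j) = (n₁ - m) * (n₂ - m) + (n₁ - m) * (m - j) := by
              rw [h3]; ring
          _ ≤ (n₁ - m) * (n₂ - m) + (n₂ - m) * (m - j) :=
              Nat.add_le_add_left (Nat.mul_le_mul_right _ h4) _
          _ = (n₁ - j) * (n₂ - m) := by rw [h2]; ring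
      exact_mod_cast hnat
    simp only [hr]
    exact mul_le_mul_of_nonneg_right key hcpos.le
  -- case split on whether ℓ is increasing everywhere
  by_cases hall : ∀ k < n₁, ℓ k ≤ ℓ (k + 1)
  · refine ⟨n₁, le_rfl, monotoneOn_of_step ℓ n₁ hall, ?_⟩
    intro a ha b hb _
    have ha' : a = n₁ := le_antisymm ha.2 ha.1
    have hb' : b = n₁ := le_antisymm hb.2 hb.1
    rw [ha', hb']
  · push_neg at hall
    have hex : ∃ k, k < n₁ ∧ ℓ (k + 1) < ℓ k := hall
    classical
    set k₀ := Nat.find hex with hk₀def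
    obtain ⟨hk₀lt, hk₀dec⟩ : k₀ < n₁ ∧ ℓ (k₀ + 1) < ℓ k₀ := Nat.find_spec hex
    refine ⟨k₀, hk₀lt.le, ?_, ?_⟩
    · apply monotoneOn_of_step
      intro k hk
      by_contra hcon
      push_neg at hcon
      exact Nat.find_min hex hk ⟨by omega, hcon⟩
    · apply antitoneOn_of_step
      intro k hk₀k hkn
      have h2 := hℓpos k₀ hk₀lt.le
      have hrk₀ : r k₀ < 1 := by
        have hlt : ℓ k₀ * r k₀ < ℓ k₀ * 1 := by
          rw [mul_one, ← hstep k₀ hk₀lt]; exact hk₀dec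
        exact (mul_lt_mul_iff_right₀ h2).mp hlt
      have hrk : r k ≤ r k₀ := hrant k₀ k hk₀k hkn
      have h3 := hℓpos k hkn.le
      calc ℓ (k + 1) = ℓ k * r k := hstep k hkn
        _ ≤ ℓ k * r k₀ := mul_le_mul_of_nonneg_left hrk h3.le
        _ ≤ ℓ k * 1 := mul_le_mul_of_nonneg_left hrk₀.le h3.le
        _ = ℓ k := mul_one _
end

section
/- For n ∈ ℕ, p ∈ [0,1], and λ > 0, the binomial distribution b_{n,p} is stochastically smaller than the Poisson distribution Poi_λ if and only if (1-p)^n ≥ e^{-λ}. -/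
/-- The Poisson weight `Poi_λ({k}) = e^{-λ} λ^k / k!`. -/
noncomputable def poissonPMF (l : ℝ) (k : ℕ) : ℝ :=
  Real.exp (-l) * l ^ k / (Nat.factorial k)

open Finset

noncomputable def binTail (n : ℕ) (p : ℝ) (k : ℕ) : ℝ :=
  ∑' j : ℕ, if k ≤ j then binomPMF n p j else 0

noncomputable def poiS (l : ℝ) (k : ℕ) : ℝ := ∑ m ∈ Finset.range k, poissonPMF l m

lemma poissonPMF_nonneg {l : ℝ} (hl : 0 ≤ l) (k : ℕ) : 0 ≤ poissonPMF l k := by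
  unfold poissonPMF; positivity

lemma summable_poissonPMF (l : ℝ) : Summable (fun j : ℕ => poissonPMF l j) := by
  unfold poissonPMF
  simpa [mul_div_assoc] using (Real.summable_pow_div_factorial l).mul_left (Real.exp (-l))

lemma tsum_poissonPMF (l : ℝ) : ∑' j : ℕ, poissonPMF l j = 1 := by
  unfold poissonPMF
  simp only [mul_div_assoc]
  rw [tsum_mul_left]
  have h : ∑' j : ℕ, l ^ j / (j.factorial : ℝ) = Real.exp l := by
    rw [Real.exp_eq_exp_ℝ, NormedSpace.exp_eq_tsum_div]
  rw [h, ← Real.exp_add]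
  simp

lemma summable_ite {f : ℕ → ℝ} (hf : Summable f) (k : ℕ) :
    Summable (fun j => if k ≤ j then f j else 0) := by
  exact (hf.indicator {j | k ≤ j}).congr fun j => by
    simp [Set.indicator_apply, Set.mem_setOf_eq]

lemma tsum_ite_eq_sub {f : ℕ → ℝ} (hf : Summable f) (k : ℕ) :
    ∑' j : ℕ, (if k ≤ j then f j else 0) = (∑' j : ℕ, f j) - ∑ m ∈ range k, f m := by
  have h2 := Summable.sum_add_tsum_nat_add (f := fun j => if k ≤ j then f j else 0) k (summable_ite hf k)
  rw [Finset.sum_eq_zero (fun m hm => by rw [if_neg]; exact not_le.2 (Finset.mem_range.1 hm)),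
    zero_add] at h2
  simp only [Nat.le_add_left, if_true] at h2
  rw [← h2, ← Summable.sum_add_tsum_nat_add k hf]
  ring

lemma tsum_ite_succ {f : ℕ → ℝ} (hf : Summable f) (k : ℕ) :
    ∑' j : ℕ, (if k + 1 ≤ j then f j else 0)
      = ∑' j : ℕ, (if k ≤ j then f (j + 1) else 0) := by
  rw [Summable.tsum_eq_zero_add (summable_ite hf (k+1))]
  simp only [Nat.add_le_add_iff_right]
  rw [if_neg (by omega), zero_add]

lemma binomPMF_eq_zero {n : ℕ} (p : ℝ) {j : ℕ} (h : n < j) : binomPMF n p j = 0 := by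
  unfold binomPMF; rw [Nat.choose_eq_zero_of_lt h]; simp

lemma summable_binomPMF (n : ℕ) (p : ℝ) : Summable (fun j => binomPMF n p j) :=
  summable_of_ne_finset_zero (s := range (n+1))
    (fun j hj => binomPMF_eq_zero p (by have := Finset.mem_range.not.1 hj; omega))

lemma tsum_binomPMF (n : ℕ) (p : ℝ) : ∑' j : ℕ, binomPMF n p j = 1 := by
  rw [tsum_eq_sum (s := range (n+1))
    (fun j hj => binomPMF_eq_zero p (by have := Finset.mem_range.not.1 hj; omega))]
  calc ∑ j ∈ range (n+1), binomPMF n p j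
      = ∑ j ∈ range (n+1), p ^ j * (1-p) ^ (n-j) * (n.choose j : ℝ) :=
        Finset.sum_congr rfl (fun j _ => by unfold binomPMF; ring)
    _ = (p + (1-p)) ^ n := (add_pow p (1-p) n).symm
    _ = 1 := by norm_num

lemma binomPMF_succ (n j : ℕ) (p : ℝ) :
    binomPMF (n+1) p (j+1) = (1-p) * binomPMF n p (j+1) + p * binomPMF n p j := by
  unfold binomPMF
  rcases le_or_gt (j+1) n with h | h
  · rw [Nat.choose_succ_succ]
    push_cast [Nat.succ_eq_add_one]
    rw [show n - j = (n - (j+1)) + 1 from by omega]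
    ring
  · have hnj : n ≤ j := by omega
    rcases eq_or_lt_of_le hnj with rfl | hlt
    · simp [Nat.choose_succ_self, Nat.sub_self, Nat.choose_self]
      ring
    · rw [Nat.choose_eq_zero_of_lt (by omega), Nat.choose_eq_zero_of_lt (by omega),
        Nat.choose_eq_zero_of_lt (by omega)]
      simp

lemma binTail_zero (n : ℕ) (p : ℝ) : binTail n p 0 = 1 := by
  unfold binTail
  simp only [Nat.zero_le, if_true]
  exact tsum_binomPMF n p

lemma summable_binom_ite' (n : ℕ) (p : ℝ) (k : ℕ) :
    Summable (fun j => if k ≤ j then binomPMF n p (j+1) else 0) :=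
  summable_of_ne_finset_zero (s := range (n+1)) fun j hj => by
    have : n < j + 1 := by have := mem_range.not.1 hj; omega
    simp [binomPMF_eq_zero p this]

lemma binTail_succ (n k : ℕ) (p : ℝ) :
    binTail (n+1) p (k+1) = (1-p) * binTail n p (k+1) + p * binTail n p k := by
  unfold binTail
  rw [tsum_ite_succ (summable_binomPMF (n+1) p) k]
  have h1 : ∀ j : ℕ, (if k ≤ j then binomPMF (n+1) p (j+1) else 0)
      = (1-p) * (if k ≤ j then binomPMF n p (j+1) else 0)
        + p * (if k ≤ j then binomPMF n p j else 0) := by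
    intro j; split
    · rw [binomPMF_succ]
    · simp
  rw [tsum_congr h1,
    Summable.tsum_add ((summable_binom_ite' n p k).mul_left _)
      ((summable_ite (summable_binomPMF n p) k).mul_left _),
    tsum_mul_left, tsum_mul_left, ← tsum_ite_succ (summable_binomPMF n p) k]

lemma poiTail_eq (l : ℝ) (k : ℕ) :
    ∑' j : ℕ, (if k ≤ j then poissonPMF l j else 0) = 1 - poiS l k := by
  rw [tsum_ite_eq_sub (summable_poissonPMF l) k, tsum_poissonPMF]; rfl

lemma hasDerivAt_exp_neg (x : ℝ) :
    HasDerivAt (fun y : ℝ => Real.exp (-y)) (-Real.exp (-x)) x := by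
  exact ((Real.hasDerivAt_exp (-x)).comp x (hasDerivAt_neg x)).congr_deriv (by ring)

lemma hasDerivAt_poissonPMF_zero (l : ℝ) :
    HasDerivAt (fun x => poissonPMF x 0) (-poissonPMF l 0) l := by
  unfold poissonPMF
  simp only [pow_zero, mul_one, Nat.factorial_zero, Nat.cast_one, div_one]
  exact hasDerivAt_exp_neg l

lemma hasDerivAt_poissonPMF (m : ℕ) (l : ℝ) :
    HasDerivAt (fun x => poissonPMF x (m+1)) (poissonPMF l m - poissonPMF l (m+1)) l := by
  unfold poissonPMF
  have h3 := ((hasDerivAt_exp_neg l).mul (hasDerivAt_pow (m+1) l)).div_const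
    (((m+1).factorial : ℕ) : ℝ)
  refine h3.congr_deriv ?_
  have hm : (m.factorial : ℝ) ≠ 0 := Nat.cast_ne_zero.2 m.factorial_ne_zero
  have hf : (((m+1).factorial : ℕ) : ℝ) = (m+1) * m.factorial := by
    rw [Nat.factorial_succ]; push_cast; ring
  rw [hf]
  simp only [Nat.add_sub_cancel]
  field_simp
  push_cast
  ring

lemma hasDerivAt_poiS (k : ℕ) (l : ℝ) :
    HasDerivAt (fun x => poiS x (k+1)) (-poissonPMF l k) l := by
  induction k with
  | zero => simpa [poiS, Finset.sum_range_one] using hasDerivAt_poissonPMF_zero l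
  | succ m ih =>
    have heq : (fun x => poiS x (m+1+1)) = fun x => poiS x (m+1) + poissonPMF x (m+1) := by
      funext x; unfold poiS; exact Finset.sum_range_succ _ _
    rw [heq]
    have h := ih.add (hasDerivAt_poissonPMF m l)
    refine h.congr_deriv ?_; ring

lemma key_ineq (a b : ℝ) (ha : 0 ≤ a) (hb : 0 ≤ b) (k : ℕ) :
    Real.exp (-b) * (1 - poiS a (k+1)) + (1 - Real.exp (-b)) * (1 - poiS a k)
      ≤ 1 - poiS (a+b) (k+1) := by
  set C1 := 1 - poiS a (k+1) with hC1
  set C2 := 1 - poiS a k with hC2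
  set g : ℝ → ℝ := fun x =>
    (1 - poiS (a+x) (k+1)) - Real.exp (-x) * C1 - (1 - Real.exp (-x)) * C2 with hg
  have hderiv : ∀ x : ℝ, HasDerivAt g
      (poissonPMF (a+x) k - Real.exp (-x) * poissonPMF a k) x := by
    intro x
    have h1 : HasDerivAt (fun y : ℝ => poiS (a+y) (k+1)) (-poissonPMF (a+x) k) x := by
      have := (hasDerivAt_poiS k (a+x)).comp x ((hasDerivAt_id x).const_add a)
      exact this.congr_deriv (by ring)
    have h2 := hasDerivAt_exp_neg x
    have h := (((hasDerivAt_const x (1:ℝ)).sub h1).sub (h2.mul_const C1)).sub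
      (((hasDerivAt_const x (1:ℝ)).sub h2).mul_const C2)
    refine h.congr_deriv ?_
    have hS : poiS a (k+1) = poiS a k + poissonPMF a k := by
      unfold poiS; exact Finset.sum_range_succ _ _
    rw [hC1, hC2, hS]; ring
  have hg0 : g 0 = 0 := by
    simp [hg, hC1]
  have hmono : MonotoneOn g (Set.Ici (0:ℝ)) := by
    apply monotoneOn_of_deriv_nonneg (convex_Ici 0)
    · exact fun x _ => (hderiv x).continuousAt.continuousWithinAt
    · exact fun x hx => (hderiv x).differentiableAt.differentiableWithinAt
    · intro x hx
      rw [interior_Ici] at hx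
      have hx0 : 0 ≤ x := le_of_lt hx
      rw [(hderiv x).deriv, sub_nonneg]
      calc Real.exp (-x) * poissonPMF a k
          = Real.exp (-(a+x)) * a^k / k.factorial := by
            unfold poissonPMF; rw [neg_add, Real.exp_add]; ring
        _ ≤ Real.exp (-(a+x)) * (a+x)^k / k.factorial := by
            (gcongr; linarith)
        _ = poissonPMF (a+x) k := rfl
  have hle : g 0 ≤ g b := hmono Set.self_mem_Ici (Set.mem_Ici.2 hb) hb
  rw [hg0] at hle
  have hgb : g b = (1 - poiS (a+b) (k+1)) - Real.exp (-b) * C1 - (1 - Real.exp (-b)) * C2 := rfl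
  rw [hgb] at hle
  linarith

lemma main_ineq (p : ℝ) (hp0 : 0 ≤ p) (hp1 : p < 1) :
    ∀ n : ℕ, ∀ l : ℝ, 0 ≤ l → Real.exp (-l) ≤ (1-p)^n →
    ∀ k : ℕ, binTail n p k ≤ 1 - poiS l k := by
  intro n
  induction n with
  | zero =>
    intro l hl _ k
    cases k with
    | zero => rw [binTail_zero]; simp [poiS]
    | succ m =>
      have h0 : binTail 0 p (m+1) = 0 := by
        unfold binTail
        convert tsum_zero with j
        split
        · exact binomPMF_eq_zero p (by omega)
        · rfl
      rw [h0, ← poiTail_eq]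
      exact tsum_nonneg fun j => by
        by_cases h : m + 1 ≤ j <;> simp [h, poissonPMF_nonneg hl]
  | succ n ih =>
    intro l hl hexp
    have h1p : 0 < 1 - p := by linarith
    set b := -Real.log (1-p) with hbdef
    have hebp : Real.exp (-b) = 1 - p := by rw [hbdef, neg_neg, Real.exp_log h1p]
    have hb0 : 0 ≤ b := by
      rw [hbdef, neg_nonneg]
      exact Real.log_nonpos (by linarith) (by linarith)
    have hpow : (1-p)^(n+1) = Real.exp (-(((n:ℝ)+1) * b)) := by
      rw [← hebp, ← Real.exp_nat_mul]
      congr 1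
      push_cast
      ring
    have hlb : ((n:ℝ)+1) * b ≤ l := by
      rw [hpow] at hexp
      have := Real.exp_le_exp.mp hexp
      linarith
    set a := l - b with hadef
    have ha0 : 0 ≤ a := by
      rw [hadef]
      nlinarith [hb0, Nat.cast_nonneg (α := ℝ) n]
    have hexpa : Real.exp (-a) ≤ (1-p)^n := by
      have h1 : Real.exp (-a) = Real.exp (-l) * Real.exp b := by
        rw [← Real.exp_add, hadef]; ring_nf
      have h2 : Real.exp b = (1-p)⁻¹ := by
        rw [← inv_inv (Real.exp b), ← Real.exp_neg, hebp]
      rw [h1, h2]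
      have h3 : (1-p)^(n+1) * (1-p)⁻¹ = (1-p)^n := by
        rw [pow_succ]; field_simp
      rw [← h3]
      gcongr
    intro k
    cases k with
    | zero => rw [binTail_zero]; simp [poiS]
    | succ k =>
      have hIH1 := ih a ha0 hexpa (k+1)
      have hIH2 := ih a ha0 hexpa k
      have hkey := key_ineq a b ha0 hb0 k
      rw [hebp, show (1 : ℝ) - (1 - p) = p from by ring] at hkey
      have hab : a + b = l := by rw [hadef]; ring
      rw [hab] at hkey
      rw [binTail_succ]
      calc (1-p) * binTail n p (k+1) + p * binTail n p k
          ≤ (1-p) * (1 - poiS a (k+1)) + p * (1 - poiS a k) := by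
            exact add_le_add (mul_le_mul_of_nonneg_left hIH1 (le_of_lt h1p))
              (mul_le_mul_of_nonneg_left hIH2 hp0)
        _ ≤ 1 - poiS l (k+1) := hkey

theorem binomial_le_poisson_iff (n : ℕ) (p l : ℝ)
    (hn : 1 ≤ n) (hp : p ∈ Set.Icc (0:ℝ) 1) (hl : 0 < l) :
    (∀ k : ℕ, (∑' j : ℕ, if k ≤ j then binomPMF n p j else 0)
        ≤ ∑' j : ℕ, if k ≤ j then poissonPMF l j else 0)
      ↔ Real.exp (-l) ≤ (1 - p) ^ n := by
  obtain ⟨hp0, hp1⟩ := hp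
  constructor
  · intro h
    have h1 := h 1
    have hL : ∑' j : ℕ, (if 1 ≤ j then binomPMF n p j else 0) = 1 - (1-p)^n := by
      rw [tsum_ite_eq_sub (summable_binomPMF n p) 1, tsum_binomPMF, Finset.sum_range_one]
      simp [binomPMF]
    have hR : ∑' j : ℕ, (if 1 ≤ j then poissonPMF l j else 0) = 1 - Real.exp (-l) := by
      rw [poiTail_eq]
      simp [poiS, poissonPMF, Finset.sum_range_one]
    rw [hL, hR] at h1
    linarith
  · intro hexp k
    have hp1' : p < 1 := by
      rcases eq_or_lt_of_le hp1 with heq | h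
      · exfalso
        rw [heq] at hexp
        simp only [sub_self, zero_pow (by omega : n ≠ 0)] at hexp
        exact absurd hexp (Real.exp_pos _).not_ge
      · exact h
    have hm := main_ineq p hp0 hp1' n l hl.le hexp k
    rw [poiTail_eq]
    exact hm
end
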